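/- Let M₁, R > 0 and let Ψ : ℝ → ℝ be φ₁-Lipschitz and φ₂-smooth with support D_Ψ = (a₁, a₂) ⊆ (−M₁R, M₁R), 0 ∈ D_Ψ, and Ψ(0) = 0. Let τ ≥ 2 be an integer, set b_j := (−1 + 2j/τ)·M₁R for 1 ≤ j ≤ τ, and set w^{(j)} := (2M₁R/τ)·Ψ'(b_j) if b_j ∈ D_Ψ and w^{(j)} := 0 otherwise. Then for all x ∈ D_Ψ, | ∫_{a₁}^{a₂} Ψ'(b)·H(x − b) db − Σ_{j=1}^τ w^{(j)}·H(x − b_j) | ≤ 2·M₁²·R²·φ₂/τ, where H is the Heaviside step function (H(t) = 1 for t ≥ 0, H(t) = 0 for t < 0). -/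

import Mathlib

/-- The Heaviside (unit) step function: `H(t) = 1` for `t ≥ 0` and `H(t) = 0` for `t < 0`. -/
noncomputable def heaviside (t : ℝ) : ℝ := if 0 ≤ t then 1 else 0

lemma zero_of_abs_le_mul {v C : ℝ} (h : ∀ ε : ℝ, 0 < ε → |v| ≤ C * ε) : v = 0 := by
  by_contra hv
  have hv' : 0 < |v| := abs_pos.mpr hv
  have hC1 : (0:ℝ) < |C| + 1 := by positivity
  have h1 := h (|v| / (2 * (|C| + 1))) (by positivity)
  have h2 : C * (|v| / (2 * (|C| + 1))) ≤ |C| * (|v| / (2 * (|C| + 1))) :=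
    mul_le_mul_of_nonneg_right (le_abs_self C) (by positivity)
  have h3 : |C| * (|v| / (2 * (|C| + 1))) < |v| := by
    rw [mul_div_assoc', div_lt_iff₀ (by positivity)]
    nlinarith [abs_nonneg C]
  linarith

lemma riemann_key (f F : ℝ → ℝ) (L δ c₀ a₂ x : ℝ) (K τ : ℕ)
    (hL : 0 ≤ L) (hδ : 0 < δ)
    (hderiv : ∀ t, HasDerivAt F (f t) t)
    (hlip : ∀ s t : ℝ, |f s - f t| ≤ L * |s - t|)
    (hF0 : F c₀ = 0) (hf0 : f c₀ = 0) (hfa2 : f a₂ = 0)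
    (hKx : c₀ + (K : ℝ) * δ ≤ x) (hxK : x < c₀ + ((K : ℝ) + 1) * δ)
    (hxa : x < a₂) (ha2 : a₂ ≤ c₀ + (τ : ℝ) * δ) (hKτ : K < τ) :
    F x - δ * ∑ j ∈ Finset.Icc 1 K, f (c₀ + (j : ℝ) * δ) ≤ (τ : ℝ) * (L * δ ^ 2) / 2 := by
  have hcont : Continuous f := by
    have hl : LipschitzWith (Real.toNNReal L) f := by
      apply LipschitzWith.of_dist_le_mul
      intro s t
      rw [Real.dist_eq, Real.dist_eq, Real.coe_toNNReal L hL]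
      exact hlip s t
    exact hl.continuous
  have hint : ∀ p q : ℝ, IntervalIntegrable f MeasureTheory.volume p q :=
    fun p q => hcont.intervalIntegrable p q
  have hFtc : ∀ p q : ℝ, (∫ t in p..q, f t) = F q - F p := fun p q =>
    intervalIntegral.integral_eq_sub_of_hasDerivAt (fun t _ => hderiv t) (hint p q)
  obtain ⟨c, hcj⟩ : ∃ c : ℕ → ℝ, ∀ j : ℕ, c j = c₀ + (j : ℝ) * δ :=
    ⟨fun j => c₀ + (j : ℝ) * δ, fun _ => rfl⟩
  have hstep : ∀ i : ℕ, c (i + 1) - c i = δ := by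
    intro i; rw [hcj, hcj]; push_cast; ring
  have hmono : ∀ i : ℕ, c i ≤ c (i + 1) := by
    intro i; nlinarith [hstep i, hδ]
  -- per-cell bound
  have cell : ∀ i : ℕ, (∫ t in c i..c (i + 1), f t) ≤
      δ * f (c (i + 1)) + L * δ ^ 2 / 2 + δ * (f (c i) - f (c (i + 1))) / 2 := by
    intro i
    have hb : (∫ t in c i..c (i + 1), f t) ≤
        ∫ _t in c i..c (i + 1), ((L * δ + f (c i) + f (c (i + 1))) / 2) := by
      apply intervalIntegral.integral_mono_on (hmono i) (hint _ _) intervalIntegrable_const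
      intro t ht
      have h1 : f t - f (c i) ≤ L * (t - c i) := by
        have h := hlip t (c i)
        rw [abs_of_nonneg (sub_nonneg.mpr ht.1)] at h
        exact le_trans (le_abs_self _) h
      have h2 : f t - f (c (i + 1)) ≤ L * (c (i + 1) - t) := by
        have h := hlip t (c (i + 1))
        rw [abs_sub_comm t (c (i + 1)), abs_of_nonneg (sub_nonneg.mpr ht.2)] at h
        exact le_trans (le_abs_self _) h
      have h3 : c (i + 1) - c i = δ := hstep i
      have h4 : L * (t - c i) + L * (c (i + 1) - t) = L * δ := by rw [← h3]; ring
      linarith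
    rw [intervalIntegral.integral_const, hstep i, smul_eq_mul] at hb
    have heq : δ * ((L * δ + f (c i) + f (c (i + 1))) / 2)
        = δ * f (c (i + 1)) + L * δ ^ 2 / 2 + δ * (f (c i) - f (c (i + 1))) / 2 := by ring
    linarith
  have hsum0 : (∑ i ∈ Finset.range K, ∫ t in c i..c (i + 1), f t) = ∫ t in (c 0)..(c K), f t :=
    intervalIntegral.sum_integral_adjacent_intervals (fun i _ => hint _ _)
  have htel : (∑ i ∈ Finset.range K, (f (c i) - f (c (i + 1)))) = f (c 0) - f (c K) :=
    Finset.sum_range_sub' (fun i => f (c i)) K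
  have hsum1 : (∑ i ∈ Finset.range K, f (c (i + 1))) = ∑ j ∈ Finset.Icc 1 K, f (c j) := by
    rw [← Finset.Ico_add_one_right_eq_Icc, Finset.sum_Ico_eq_sum_range]
    simp [add_comm]
  have hIcK : (∫ t in (c 0)..(c K), f t) ≤ δ * (∑ j ∈ Finset.Icc 1 K, f (c j))
      + (K : ℝ) * (L * δ ^ 2) / 2 + δ * (f (c 0) - f (c K)) / 2 := by
    rw [← hsum0]
    calc (∑ i ∈ Finset.range K, ∫ t in c i..c (i + 1), f t)
        ≤ ∑ i ∈ Finset.range K,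
            (δ * f (c (i + 1)) + L * δ ^ 2 / 2 + δ * (f (c i) - f (c (i + 1))) / 2) :=
          Finset.sum_le_sum (fun i _ => cell i)
      _ = δ * (∑ i ∈ Finset.range K, f (c (i + 1))) + (K : ℝ) * (L * δ ^ 2) / 2
            + δ * (∑ i ∈ Finset.range K, (f (c i) - f (c (i + 1)))) / 2 := by
          rw [Finset.sum_add_distrib, Finset.sum_add_distrib, Finset.sum_const,
            Finset.card_range, nsmul_eq_mul, ← Finset.mul_sum, ← Finset.sum_div,
            ← Finset.mul_sum]
          push_cast; ring
      _ = δ * (∑ j ∈ Finset.Icc 1 K, f (c j)) + (K : ℝ) * (L * δ ^ 2) / 2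
            + δ * (f (c 0) - f (c K)) / 2 := by rw [hsum1, htel]
  have hcKx : c K ≤ x := by rw [hcj]; exact hKx
  have hA : (∫ t in c K..x, f t) ≤ (x - c K) * ((f (c K) + L * (a₂ - c K)) / 2) := by
    have hb : (∫ t in c K..x, f t) ≤ ∫ _t in c K..x, ((f (c K) + L * (a₂ - c K)) / 2) := by
      apply intervalIntegral.integral_mono_on hcKx (hint _ _) intervalIntegrable_const
      intro t ht
      have h1 : f t - f (c K) ≤ L * (t - c K) := by
        have h := hlip t (c K)
        rw [abs_of_nonneg (sub_nonneg.mpr ht.1)] at h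
        exact le_trans (le_abs_self _) h
      have h2 : f t - f a₂ ≤ L * (a₂ - t) := by
        have h := hlip t a₂
        have hta : t ≤ a₂ := le_trans ht.2 hxa.le
        rw [abs_sub_comm t a₂, abs_of_nonneg (sub_nonneg.mpr hta)] at h
        exact le_trans (le_abs_self _) h
      rw [hfa2] at h2
      have h4 : L * (t - c K) + L * (a₂ - t) = L * (a₂ - c K) := by ring
      linarith
    rw [intervalIntegral.integral_const, smul_eq_mul] at hb
    exact hb
  have hFx : F x = (∫ t in (c 0)..(c K), f t) + ∫ t in c K..x, f t := by
    rw [hFtc, hFtc]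
    have h0 : c 0 = c₀ := by rw [hcj]; simp
    rw [h0, hF0]; ring
  have hc0 : f (c 0) = 0 := by
    have h0 : c 0 = c₀ := by rw [hcj]; simp
    rw [h0]; exact hf0
  have hs : x - c K < δ := by
    have h0 : c K = c₀ + (K : ℝ) * δ := hcj K
    linarith [hxK]
  have hs0 : 0 ≤ x - c K := by linarith
  have hu0 : 0 ≤ a₂ - c K := by linarith
  have hu : a₂ - c K ≤ ((τ : ℝ) - (K : ℝ)) * δ := by
    have h0 : c K = c₀ + (K : ℝ) * δ := hcj K
    nlinarith [ha2]
  have hh : -(L * (a₂ - c K)) ≤ f (c K) := by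
    have h := hlip (c K) a₂
    rw [hfa2, sub_zero] at h
    have habs : |c K - a₂| = a₂ - c K := by rw [abs_sub_comm, abs_of_nonneg hu0]
    rw [habs] at h
    linarith [neg_abs_le (f (c K))]
  have hKτ' : (K : ℝ) + 1 ≤ (τ : ℝ) := by exact_mod_cast hKτ
  have hhLu : 0 ≤ f (c K) + L * (a₂ - c K) := by linarith
  have p1 : (x - c K) * (f (c K) + L * (a₂ - c K)) ≤ δ * (f (c K) + L * (a₂ - c K)) :=
    mul_le_mul_of_nonneg_right hs.le hhLu
  have p2 : L * δ * (a₂ - c K) ≤ L * δ * (((τ : ℝ) - (K : ℝ)) * δ) :=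
    mul_le_mul_of_nonneg_left hu (mul_nonneg hL hδ.le)
  have main2 : (K : ℝ) * (L * δ ^ 2) / 2 - δ * f (c K) / 2
      + (x - c K) * ((f (c K) + L * (a₂ - c K)) / 2) ≤ (τ : ℝ) * (L * δ ^ 2) / 2 := by
    nlinarith [p1, p2]
  rw [hc0] at hIcK
  have hgoal : F x - δ * ∑ j ∈ Finset.Icc 1 K, f (c j) ≤ (τ : ℝ) * (L * δ ^ 2) / 2 := by
    rw [hFx]
    linarith [hIcK, hA, main2]
  have hsc : (∑ j ∈ Finset.Icc 1 K, f (c₀ + (j : ℝ) * δ)) = ∑ j ∈ Finset.Icc 1 K, f (c j) :=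
    Finset.sum_congr rfl (fun j _ => by rw [hcj])
  rw [hsc]
  exact hgoal

/-- **Riemann-sum approximation by a two-layer Heaviside network.** Let `Ψ` be
`φ₁`-Lipschitz and `φ₂`-smooth, vanishing outside its support `(a₁, a₂) ⊆ (-M₁R, M₁R)` with
`0 ∈ (a₁, a₂)` and `Ψ(0) = 0`. With breakpoints `b_j = (-1 + 2j/τ)·M₁R` and weights
`w^{(j)} = (2M₁R/τ)·Ψ'(b_j)` for `b_j ∈ (a₁, a₂)` (and `0` otherwise), for all `x ∈ (a₁, a₂)`,
`|∫_{a₁}^{a₂} Ψ'(b)·H(x-b) db - Σ_{j=1}^τ w^{(j)}·H(x-b_j)| ≤ 2M₁²R²φ₂/τ`. -/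
theorem riemann_sum_network_approximation
    (M₁ R φ₁ φ₂ a₁ a₂ : ℝ) (hM₁ : 0 < M₁) (hR : 0 < R)
    (Ψ Ψ' : ℝ → ℝ)
    (hΨ_lip : ∀ x y : ℝ, |Ψ x - Ψ y| ≤ φ₁ * |x - y|)
    (hΨ' : ∀ x : ℝ, HasDerivAt Ψ (Ψ' x) x)
    (hΨ'_lip : ∀ x y : ℝ, |Ψ' x - Ψ' y| ≤ φ₂ * |x - y|)
    (hsub : Set.Ioo a₁ a₂ ⊆ Set.Ioo (-(M₁ * R)) (M₁ * R))
    (hsupp : ∀ x : ℝ, x ∉ Set.Ioo a₁ a₂ → Ψ x = 0)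
    (h0 : 0 ∈ Set.Ioo a₁ a₂) (hΨ0 : Ψ 0 = 0)
    (τ : ℕ) (hτ : 2 ≤ τ)
    (b : ℕ → ℝ) (hb : ∀ j, b j = (-1 + 2 * (j : ℝ) / (τ : ℝ)) * (M₁ * R))
    (w : ℕ → ℝ)
    (hw : ∀ j, w j = if a₁ < b j ∧ b j < a₂ then (2 * M₁ * R / (τ : ℝ)) * Ψ' (b j) else 0) :
    ∀ x ∈ Set.Ioo a₁ a₂,
      |(∫ t in a₁..a₂, Ψ' t * heaviside (x - t)) -
          ∑ j ∈ Finset.Icc 1 τ, w j * heaviside (x - b j)|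
        ≤ 2 * M₁ ^ 2 * R ^ 2 * φ₂ / (τ : ℝ) := by
  classical
  intro x hx
  obtain ⟨hxa₁, hxa₂⟩ := hx
  have hMR : 0 < M₁ * R := mul_pos hM₁ hR
  have hτ0 : (0 : ℝ) < (τ : ℝ) := by
    have : 0 < τ := by omega
    exact_mod_cast this
  set δ : ℝ := 2 * M₁ * R / (τ : ℝ) with hδdef
  have hδ : 0 < δ := by rw [hδdef]; positivity
  have ha₁a₂ : a₁ < a₂ := lt_trans hxa₁ hxa₂
  have ha₁ : -(M₁ * R) ≤ a₁ := by
    by_contra hcon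
    push_neg at hcon
    have h1 : (a₁ + -(M₁ * R)) / 2 ∈ Set.Ioo a₁ a₂ := by
      constructor
      · linarith
      · have : a₂ > 0 := h0.2
        linarith
    have h2 := (hsub h1).1
    linarith
  have ha₂ : a₂ ≤ M₁ * R := by
    by_contra hcon
    push_neg at hcon
    have h1 : (a₂ + M₁ * R) / 2 ∈ Set.Ioo a₁ a₂ := by
      constructor
      · have : a₁ < 0 := h0.1
        linarith
      · linarith
    have h2 := (hsub h1).2
    linarith
  have hφ₂ : 0 ≤ φ₂ := by
    have h := hΨ'_lip 0 1
    have h1 : |(0 : ℝ) - 1| = 1 := by norm_num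
    rw [h1, mul_one] at h
    linarith [abs_nonneg (Ψ' 0 - Ψ' 1)]
  -- Ψ' vanishes off the open support
  have hΨ'ext : ∀ t : ℝ, t < a₁ ∨ a₂ < t → Ψ' t = 0 := by
    intro t ht
    have hopen : ∃ s : Set ℝ, IsOpen s ∧ t ∈ s ∧ ∀ y ∈ s, Ψ y = 0 := by
      rcases ht with h | h
      · exact ⟨Set.Iio a₁, isOpen_Iio, h,
          fun y hy => hsupp y (fun hmem => absurd hmem.1 (not_lt.mpr (le_of_lt hy)))⟩
      · exact ⟨Set.Ioi a₂, isOpen_Ioi, h,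
          fun y hy => hsupp y (fun hmem => absurd hmem.2 (not_lt.mpr (le_of_lt hy)))⟩
    obtain ⟨s, hs, hts, hzero⟩ := hopen
    have hev : Ψ =ᶠ[nhds t] (fun _ => (0 : ℝ)) :=
      Filter.eventuallyEq_of_mem (hs.mem_nhds hts) hzero
    have hd0 : HasDerivAt Ψ 0 t := (hasDerivAt_const t (0 : ℝ)).congr_of_eventuallyEq hev
    exact (hΨ' t).unique hd0
  have hΨ'cl : ∀ t : ℝ, t ≤ a₁ ∨ a₂ ≤ t → Ψ' t = 0 := by
    intro t ht
    apply zero_of_abs_le_mul (C := φ₂)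
    intro ε hε
    rcases ht with h | h
    · have h1 : Ψ' (t - ε) = 0 := hΨ'ext _ (Or.inl (by linarith))
      have h2 := hΨ'_lip t (t - ε)
      rw [h1, sub_zero] at h2
      have h3 : |t - (t - ε)| = ε := by rw [show t - (t - ε) = ε by ring, abs_of_pos hε]
      rwa [h3] at h2
    · have h1 : Ψ' (t + ε) = 0 := hΨ'ext _ (Or.inr (by linarith))
      have h2 := hΨ'_lip t (t + ε)
      rw [h1, sub_zero] at h2
      have h3 : |t - (t + ε)| = ε := by
        rw [show t - (t + ε) = -ε by ring, abs_neg, abs_of_pos hε]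
      rwa [h3] at h2
  have hΨ'notmem : ∀ t : ℝ, ¬(a₁ < t ∧ t < a₂) → Ψ' t = 0 := by
    intro t h
    rcases not_and_or.mp h with h | h
    · exact hΨ'cl t (Or.inl (not_lt.mp h))
    · exact hΨ'cl t (Or.inr (not_lt.mp h))
  have hΨle : ∀ z : ℝ, z ≤ a₁ → Ψ z = 0 := by
    intro z hz
    apply zero_of_abs_le_mul (C := φ₁)
    intro ε hε
    have h1 : Ψ (z - ε) = 0 := hsupp _ (fun hmem => by
      have := hmem.1; linarith)
    have h2 := hΨ_lip z (z - ε)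
    rw [h1, sub_zero] at h2
    have h3 : |z - (z - ε)| = ε := by rw [show z - (z - ε) = ε by ring, abs_of_pos hε]
    rwa [h3] at h2
  -- breakpoints
  have hbj : ∀ j : ℕ, b j = -(M₁ * R) + (j : ℝ) * δ := by
    intro j
    rw [hb, hδdef]
    field_simp
  have hbmono : ∀ {i j : ℕ}, i ≤ j → b i ≤ b j := by
    intro i j hij
    rw [hbj, hbj]
    have hij' : (i : ℝ) ≤ (j : ℝ) := by exact_mod_cast hij
    nlinarith [hδ]
  have hb0x : b 0 ≤ x := by
    rw [hbj]
    simp only [Nat.cast_zero, zero_mul, add_zero]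
    linarith
  set K : ℕ := Nat.findGreatest (fun j => b j ≤ x) τ with hKdef
  have hbKle : b K ≤ x := by
    have h := Nat.findGreatest_spec (P := fun j => b j ≤ x) (m := 0) (Nat.zero_le τ) hb0x
    simpa [hKdef] using h
  have hbτx : ¬ (b τ ≤ x) := by
    rw [hbj]
    push_neg
    have hτδ : (τ : ℝ) * δ = 2 * M₁ * R := by
      rw [hδdef]; field_simp
    rw [hτδ]
    linarith
  have hKτ : K < τ := by
    rcases lt_or_eq_of_le (Nat.findGreatest_le (P := fun j => b j ≤ x) τ) with h | h
    · exact h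
    · exact absurd (h ▸ hbKle) hbτx
  have hbK1 : x < b (K + 1) := by
    have h := Nat.findGreatest_is_greatest (P := fun j => b j ≤ x) (n := τ) (k := K + 1)
      (by rw [← hKdef]; exact Nat.lt_succ_self K) hKτ
    simpa using not_le.mp h
  -- continuity of Ψ'
  have hΨ'cont : Continuous Ψ' := by
    have hl : LipschitzWith (Real.toNNReal φ₂) Ψ' := by
      apply LipschitzWith.of_dist_le_mul
      intro s t
      rw [Real.dist_eq, Real.dist_eq, Real.coe_toNNReal φ₂ hφ₂]
      exact hΨ'_lip s t
    exact hl.continuous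
  -- the integral equals Ψ x
  have hxuIoc1 : Set.uIoc a₁ x = Set.Ioc a₁ x := Set.uIoc_of_le hxa₁.le
  have hxuIoc2 : Set.uIoc x a₂ = Set.Ioc x a₂ := Set.uIoc_of_le hxa₂.le
  have i1 : IntervalIntegrable (fun t => Ψ' t * heaviside (x - t))
      MeasureTheory.volume a₁ x := by
    apply (hΨ'cont.intervalIntegrable a₁ x).congr
    intro t ht
    rw [hxuIoc1] at ht
    have hH : heaviside (x - t) = 1 := if_pos (by linarith [ht.2])
    simp only [hH, mul_one]
  have i2 : IntervalIntegrable (fun t => Ψ' t * heaviside (x - t))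
      MeasureTheory.volume x a₂ := by
    apply (intervalIntegrable_const (c := (0 : ℝ))).congr
    intro t ht
    rw [hxuIoc2] at ht
    have hH : heaviside (x - t) = 0 := if_neg (by simp only [not_le]; linarith [ht.1])
    simp only [hH, mul_zero]
  have e1 : (∫ t in a₁..x, Ψ' t * heaviside (x - t)) = ∫ t in a₁..x, Ψ' t := by
    apply intervalIntegral.integral_congr
    intro t ht
    rw [Set.uIcc_of_le hxa₁.le] at ht
    have hH : heaviside (x - t) = 1 := if_pos (by linarith [ht.2])
    simp [hH]
  have e2 : (∫ t in x..a₂, Ψ' t * heaviside (x - t)) = 0 := by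
    have hcg : (∫ t in x..a₂, Ψ' t * heaviside (x - t))
        = ∫ _t in x..a₂, (0 : ℝ) := by
      apply intervalIntegral.integral_congr_ae
      apply Filter.Eventually.of_forall
      intro t ht
      rw [hxuIoc2] at ht
      have hH : heaviside (x - t) = 0 := if_neg (by simp only [not_le]; linarith [ht.1])
      simp [hH]
    rw [hcg, intervalIntegral.integral_zero]
  have hΨa₁ : Ψ a₁ = 0 := hΨle a₁ le_rfl
  have hFTC : (∫ t in a₁..x, Ψ' t) = Ψ x - Ψ a₁ :=
    intervalIntegral.integral_eq_sub_of_hasDerivAt (fun t _ => hΨ' t)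
      (hΨ'cont.intervalIntegrable a₁ x)
  have hInt : (∫ t in a₁..a₂, Ψ' t * heaviside (x - t)) = Ψ x := by
    rw [← intervalIntegral.integral_add_adjacent_intervals i1 i2, e1, e2, hFTC, hΨa₁]
    ring
  -- the sum
  have hS : (∑ j ∈ Finset.Icc 1 τ, w j * heaviside (x - b j))
      = δ * ∑ j ∈ Finset.Icc 1 K, Ψ' (b j) := by
    have hsplit : (∑ j ∈ Finset.Ioc 0 K, w j * heaviside (x - b j))
        + (∑ j ∈ Finset.Ioc K τ, w j * heaviside (x - b j))
        = ∑ j ∈ Finset.Ioc 0 τ, w j * heaviside (x - b j) :=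
      Finset.sum_Ioc_consecutive _ (Nat.zero_le K) hKτ.le
    have h2 : (∑ j ∈ Finset.Ioc K τ, w j * heaviside (x - b j)) = 0 := by
      apply Finset.sum_eq_zero
      intro j hj
      have hKj : K + 1 ≤ j := (Finset.mem_Ioc.mp hj).1
      have hbj' : b (K + 1) ≤ b j := hbmono hKj
      have hH : heaviside (x - b j) = 0 := if_neg (by simp only [not_le]; linarith)
      rw [hH, mul_zero]
    have h1 : (∑ j ∈ Finset.Ioc 0 K, w j * heaviside (x - b j))
        = ∑ j ∈ Finset.Ioc 0 K, δ * Ψ' (b j) := by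
      apply Finset.sum_congr rfl
      intro j hj
      have hjK : j ≤ K := (Finset.mem_Ioc.mp hj).2
      have hbjx : b j ≤ x := le_trans (hbmono hjK) hbKle
      have hH : heaviside (x - b j) = 1 := if_pos (by linarith)
      rw [hH, mul_one, hw]
      split_ifs with hmem
      · rw [hδdef]
      · rw [hΨ'notmem _ hmem, mul_zero]
    have hIoc : Finset.Icc 1 τ = Finset.Ioc 0 τ := by rw [← Finset.Icc_add_one_left_eq_Ioc]; rfl
    have hIocK : Finset.Icc 1 K = Finset.Ioc 0 K := by rw [← Finset.Icc_add_one_left_eq_Ioc]; rfl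
    rw [hIoc, ← hsplit, h2, add_zero, h1, hIocK, Finset.mul_sum]
  -- apply the key lemma in both directions
  have hτδ : (τ : ℝ) * δ = 2 * M₁ * R := by rw [hδdef]; field_simp
  have hKx : -(M₁ * R) + (K : ℝ) * δ ≤ x := by rw [← hbj]; exact hbKle
  have hxK : x < -(M₁ * R) + ((K : ℝ) + 1) * δ := by
    have h := hbK1
    rw [hbj] at h
    push_cast at h
    exact h
  have ha2' : a₂ ≤ -(M₁ * R) + (τ : ℝ) * δ := by rw [hτδ]; linarith
  have hup := riemann_key Ψ' Ψ φ₂ δ (-(M₁ * R)) a₂ x K τ hφ₂ hδ hΨ' hΨ'_lip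
    (hΨle _ ha₁) (hΨ'cl _ (Or.inl ha₁)) (hΨ'cl a₂ (Or.inr le_rfl))
    hKx hxK hxa₂ ha2' hKτ
  have hdown := riemann_key (fun t => -Ψ' t) (fun t => -Ψ t) φ₂ δ (-(M₁ * R)) a₂ x K τ
    hφ₂ hδ (fun t => (hΨ' t).neg)
    (fun s t => by rw [show -Ψ' s - -Ψ' t = -(Ψ' s - Ψ' t) by ring, abs_neg]; exact hΨ'_lip s t)
    (by simp only [neg_eq_zero]; exact hΨle _ ha₁)
    (by simp only [neg_eq_zero]; exact hΨ'cl _ (Or.inl ha₁))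
    (by simp only [neg_eq_zero]; exact hΨ'cl a₂ (Or.inr le_rfl))
    hKx hxK hxa₂ ha2' hKτ
  have hbsum : (∑ j ∈ Finset.Icc 1 K, Ψ' (-(M₁ * R) + (j : ℝ) * δ))
      = ∑ j ∈ Finset.Icc 1 K, Ψ' (b j) :=
    Finset.sum_congr rfl (fun j _ => by rw [hbj])
  rw [hbsum] at hup
  have hdown' : -Ψ x + δ * ∑ j ∈ Finset.Icc 1 K, Ψ' (b j)
      ≤ (τ : ℝ) * (φ₂ * δ ^ 2) / 2 := by
    have h := hdown
    simp only [Finset.sum_neg_distrib, mul_neg, sub_neg_eq_add] at h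
    rwa [hbsum] at h
  have hBeq : (τ : ℝ) * (φ₂ * δ ^ 2) / 2 = 2 * M₁ ^ 2 * R ^ 2 * φ₂ / (τ : ℝ) := by
    rw [hδdef]
    field_simp
  rw [hInt, hS, abs_le]
  constructor
  · linarith [hdown', hBeq]
  · linarith [hup, hBeq]
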